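/- arXiv:2104.01144 — 4 statements merged into one kernel-verified Lean document; each statement's English description precedes it below -/
import Mathlib

section
/- Let (Ω,𝓐,P) be a probability space, n ≥ 1, and X₁,…,Xₙ : Ω → ℝ random variables. Assume the concentration hypothesis (C): there are constants c > 0, Δ > 0 and H ∈ (0,1), with a_H := max(2H,1) and b_H := min(1, 2−2H), such that for every function F : ℝⁿ → ℝ that is Lipschitz with respect to the distance d₁ (with Lipschitz seminorm ‖F‖_Lip) and for which F(X₁,…,Xₙ) is integrable, and every r > 0, one has P(F(X₁,…,Xₙ) − E[F(X₁,…,Xₙ)] > r) ≤ exp(−r² / (c ‖F‖_Lip² n^{a_H} Δ^{−b_H})). Let 𝓕 be a nonempty family of Lipschitz functions φ : ℝ → ℝ with c_𝓕 := sup_{φ∈𝓕} ‖φ‖_Lip < ∞, such that each φ(X_i) is integrable; set ν_n(φ) := (1/n) Σ_{i=1}^n (φ(X_i) − E[φ(X_i)]), and assume Z := sup_{φ∈𝓕} |ν_n(φ)| is finite almost surely, measurable and integrable. Then for every real 𝔥 ≥ E[Z] and every r > 0, P(Z − 𝔥 > r) ≤ exp(−(r² / (c c_𝓕²)) (nΔ)^{b_H}).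 -/
open MeasureTheory Real
open scoped NNReal ENNReal BigOperators

/-- Concentration inequality for the supremum of the empirical process, derived from the
concentration hypothesis (C) for Lipschitz functionals (w.r.t. the distance `d₁`) of the
sample `X₁, …, Xₙ`. -/
theorem supremum_empirical_process_concentration
    {Ω : Type*} [MeasurableSpace Ω] (P : Measure Ω) [IsProbabilityMeasure P]
    (n : ℕ) (hn : 1 ≤ n) (X : Fin n → Ω → ℝ)
    (c Δ H aH bH : ℝ) (hc : 0 < c) (hΔ : 0 < Δ) (hH : H ∈ Set.Ioo (0 : ℝ) 1)
    (haH : aH = max (2 * H) 1) (hbH : bH = min 1 (2 - 2 * H))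
    -- hypothesis (C)
    (hC : ∀ (F : (Fin n → ℝ) → ℝ) (K : ℝ≥0),
        (∀ x y : Fin n → ℝ, |F y - F x| ≤ (K : ℝ) * ∑ i, |y i - x i|) →
        Integrable (fun ω => F (fun i => X i ω)) P →
        ∀ r > (0 : ℝ),
          P {ω | F (fun i => X i ω) - ∫ ω', F (fun i => X i ω') ∂P > r}
            ≤ ENNReal.ofReal
                (Real.exp (-(r ^ 2) / (c * (K : ℝ) ^ 2 * (n : ℝ) ^ aH * Δ ^ (-bH)))))
    -- the family 𝓕 of Lipschitz functions, with uniform Lipschitz bound c𝓕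
    (𝓕 : Set (ℝ → ℝ)) (h𝓕 : 𝓕.Nonempty) (c𝓕 : ℝ≥0)
    (hLip : ∀ φ ∈ 𝓕, LipschitzWith c𝓕 φ)
    (hInt : ∀ φ ∈ 𝓕, ∀ i, Integrable (fun ω => φ (X i ω)) P)
    -- Z = sup_{φ ∈ 𝓕} |ν_n(φ)|, assumed (a.s.) finite, and integrable
    (Z : Ω → ℝ)
    (hZ : ∀ᵐ ω ∂P, IsLUB
      ((fun φ : ℝ → ℝ =>
          |(n : ℝ)⁻¹ * ∑ i, (φ (X i ω) - ∫ ω', φ (X i ω') ∂P)|) '' 𝓕) (Z ω))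
    (hZint : Integrable Z P)
    (𝔥 : ℝ) (h𝔥 : ∫ ω, Z ω ∂P ≤ 𝔥) :
    ∀ r > (0 : ℝ),
      P {ω | Z ω - 𝔥 > r}
        ≤ ENNReal.ofReal
            (Real.exp (-(r ^ 2 / (c * (c𝓕 : ℝ) ^ 2)) * ((n : ℝ) * Δ) ^ bH)) := by
  intro r hr
  have hN : (0 : ℝ) < (n : ℝ) := by exact_mod_cast Nat.lt_of_lt_of_le Nat.zero_lt_one hn
  obtain ⟨ω₀, hω₀⟩ := hZ.exists
  -- the functional F
  set g : (ℝ → ℝ) → (Fin n → ℝ) → ℝ :=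
    fun φ x => |(n : ℝ)⁻¹ * ∑ i, (φ (x i) - ∫ ω', φ (X i ω') ∂P)| with hgdef
  set F : (Fin n → ℝ) → ℝ := fun x => sSup ((fun φ => g φ x) '' 𝓕) with hFdef
  -- pointwise Lipschitz bound for each g φ
  have hgLip : ∀ φ ∈ 𝓕, ∀ x y : Fin n → ℝ,
      g φ y ≤ g φ x + (c𝓕 : ℝ) / n * ∑ i, |y i - x i| := by
    intro φ hφ x y
    have h1 : g φ y - g φ x ≤
        |(n : ℝ)⁻¹ * ∑ i, (φ (y i) - ∫ ω', φ (X i ω') ∂P)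
          - (n : ℝ)⁻¹ * ∑ i, (φ (x i) - ∫ ω', φ (X i ω') ∂P)| := by
      simpa [hgdef] using abs_sub_abs_le_abs_sub
        ((n : ℝ)⁻¹ * ∑ i, (φ (y i) - ∫ ω', φ (X i ω') ∂P))
        ((n : ℝ)⁻¹ * ∑ i, (φ (x i) - ∫ ω', φ (X i ω') ∂P))
    have h2 : (n : ℝ)⁻¹ * ∑ i, (φ (y i) - ∫ ω', φ (X i ω') ∂P)
          - (n : ℝ)⁻¹ * ∑ i, (φ (x i) - ∫ ω', φ (X i ω') ∂P)
        = (n : ℝ)⁻¹ * ∑ i, (φ (y i) - φ (x i)) := by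
      rw [← mul_sub, ← Finset.sum_sub_distrib]
      ring_nf
    have h3 : |(n : ℝ)⁻¹ * ∑ i, (φ (y i) - φ (x i))|
        ≤ (n : ℝ)⁻¹ * ∑ i, (c𝓕 : ℝ) * |y i - x i| := by
      rw [abs_mul, abs_of_nonneg (by positivity : (0:ℝ) ≤ (n : ℝ)⁻¹)]
      refine mul_le_mul_of_nonneg_left ?_ (by positivity)
      refine le_trans (Finset.abs_sum_le_sum_abs _ _) (Finset.sum_le_sum fun i _ => ?_)
      have := (hLip φ hφ).dist_le_mul (y i) (x i)
      simpa [Real.dist_eq] using this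
    have h4 : (n : ℝ)⁻¹ * ∑ i, (c𝓕 : ℝ) * |y i - x i|
        = (c𝓕 : ℝ) / n * ∑ i, |y i - x i| := by
      rw [← Finset.mul_sum]; ring
    rw [h2] at h1
    linarith [h1, h3.trans_eq h4]
  -- the image sets are bounded above
  have hbdd : ∀ x : Fin n → ℝ, BddAbove ((fun φ => g φ x) '' 𝓕) := by
    intro x
    refine ⟨Z ω₀ + (c𝓕 : ℝ) / n * ∑ i, |x i - X i ω₀|, ?_⟩
    rintro _ ⟨φ, hφ, rfl⟩
    have hub : g φ (fun i => X i ω₀) ≤ Z ω₀ := hω₀.1 ⟨φ, hφ, rfl⟩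
    have := hgLip φ hφ (fun i => X i ω₀) x
    linarith
  -- F is Lipschitz w.r.t. d₁
  have hkey : ∀ x y : Fin n → ℝ, F y ≤ F x + (c𝓕 : ℝ) / n * ∑ i, |y i - x i| := by
    intro x y
    refine csSup_le (h𝓕.image _) ?_
    rintro _ ⟨φ, hφ, rfl⟩
    have h1 := hgLip φ hφ x y
    have h2 : g φ x ≤ F x := le_csSup (hbdd x) ⟨φ, hφ, rfl⟩
    linarith
  have hFlip : ∀ x y : Fin n → ℝ,
      |F y - F x| ≤ ((c𝓕 * (n : ℝ≥0)⁻¹ : ℝ≥0) : ℝ) * ∑ i, |y i - x i| := by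
    intro x y
    have hc1 : ((c𝓕 * (n : ℝ≥0)⁻¹ : ℝ≥0) : ℝ) = (c𝓕 : ℝ) / n := by
      push_cast; rw [div_eq_mul_inv]
    rw [hc1, abs_sub_le_iff]
    constructor
    · have := hkey x y; linarith
    · have h := hkey y x
      have hsym : ∑ i, |x i - y i| = ∑ i, |y i - x i| := by
        exact Finset.sum_congr rfl fun i _ => abs_sub_comm _ _
      rw [hsym] at h; linarith
  -- F agrees a.e. with Z along the sample
  have hFX : ∀ᵐ ω ∂P, F (fun i => X i ω) = Z ω := by
    filter_upwards [hZ] with ω h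
    exact h.csSup_eq (h𝓕.image _)
  have hFint : Integrable (fun ω => F (fun i => X i ω)) P :=
    hZint.congr (hFX.mono fun ω h => h.symm)
  have hEF : ∫ ω', F (fun i => X i ω') ∂P = ∫ ω, Z ω ∂P := integral_congr_ae hFX
  -- apply hypothesis (C)
  have hmain := hC F (c𝓕 * (n : ℝ≥0)⁻¹) hFlip hFint r hr
  have hsub : P {ω | Z ω - 𝔥 > r} ≤ P {ω | F (fun i => X i ω) - ∫ ω', F (fun i => X i ω') ∂P > r} := by
    refine measure_mono_ae ?_
    filter_upwards [hFX] with ω h hmem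
    have hmem' : Z ω - 𝔥 > r := hmem
    show F (fun i => X i ω) - ∫ ω', F (fun i => X i ω') ∂P > r
    rw [h, hEF]
    linarith
  refine hsub.trans (hmain.trans (le_of_eq ?_))
  congr 1
  -- equality of the exponents
  have hab : aH + bH = 2 := by
    rw [haH, hbH]
    rcases le_total (2 * H) 1 with h | h
    · rw [max_eq_right h, min_eq_left (by linarith)]; norm_num
    · rw [max_eq_left h, min_eq_right (by linarith)]; ring
  rcases eq_or_lt_of_le (zero_le : (0 : ℝ≥0) ≤ c𝓕) with h0 | h0
  · rw [← h0]
    norm_num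
  · have hc𝓕 : (0 : ℝ) < (c𝓕 : ℝ) := h0
    have hND : (0 : ℝ) < ((n : ℝ) * Δ) ^ bH := Real.rpow_pos_of_pos (by positivity) _
    have hK : ((c𝓕 * (n : ℝ≥0)⁻¹ : ℝ≥0) : ℝ) = (c𝓕 : ℝ) / n := by
      push_cast; rw [div_eq_mul_inv]
    have e1 : (n : ℝ) ^ aH / (n : ℝ) ^ (2 : ℕ) = (n : ℝ) ^ (-bH) := by
      rw [← Real.rpow_natCast (n : ℝ) 2, ← Real.rpow_sub hN]
      congr 1; push_cast; linarith
    have e2 : (n : ℝ) ^ (-bH) * Δ ^ (-bH) = (((n : ℝ) * Δ) ^ bH)⁻¹ := by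
      rw [← Real.mul_rpow hN.le hΔ.le, Real.rpow_neg (by positivity)]
    have hden : c * ((c𝓕 * (n : ℝ≥0)⁻¹ : ℝ≥0) : ℝ) ^ 2 * (n : ℝ) ^ aH * Δ ^ (-bH)
        = c * (c𝓕 : ℝ) ^ 2 * (((n : ℝ) * Δ) ^ bH)⁻¹ := by
      rw [hK, ← e2, ← e1]
      have hn2 : ((n : ℝ) ^ (2:ℕ)) ≠ 0 := by positivity
      field_simp
    rw [hden]
    congr 1
    have h1 : c * (c𝓕 : ℝ) ^ 2 ≠ 0 := by positivity
    field_simp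
end

section
/- Let I ⊆ ℝ be an interval and φ₁,…,φ_m : ℝ → ℝ bounded Lipschitz functions vanishing outside I that form an orthonormal family of L²(I,dx); set L(m) := Σ_{j=1}^m ‖φⱼ‖_Lip² and let S_m be the linear span of φ₁,…,φ_m. Let X₁,…,Xₙ be identically distributed real random variables whose common law has a density f with respect to Lebesgue measure, with f ∈ L²(ℝ,dx). Assume the concentration hypothesis (C'): there are constants c > 0, Δ > 0 and H ∈ (0,1), with b_H := min(1, 2−2H), such that for every Lipschitz ψ : ℝ → ℝ with ψ(X₁) integrable and every r > 0, P( |(1/n) Σ_{i=1}^n (ψ(X_i) − E[ψ(X_i)])| > r ) ≤ 2 exp(−(r² / (c ‖ψ‖_Lip²)) (nΔ)^{b_H}). Let f̂_m := Σ_{j=1}^m θ̂ⱼ φⱼ with θ̂ⱼ := (1/n) Σ_{i=1}^n φⱼ(X_i) be the projection estimator. Then E[ ∫_I (f̂_m(x) − f(x))² dx ] ≤ min_{t ∈ S_m} ∫_I (t(x) − f(x))² dx + 2c · m·L(m) / (nΔ)^{b_H}. -/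
open MeasureTheory Real
open scoped NNReal ENNReal BigOperators

lemma aux_mul_integrable {α : Type*} [MeasurableSpace α] {μ : Measure α}
    {f g : α → ℝ} (hf : MemLp f 2 μ) (hg : MemLp g 2 μ) :
    Integrable (fun x => f x * g x) μ := by
  have hf2 := hf.integrable_sq
  have hg2 := hg.integrable_sq
  refine Integrable.mono' ((hf2.add hg2).const_mul (1/2 : ℝ))
    (hf.aestronglyMeasurable.mul hg.aestronglyMeasurable) (Filter.Eventually.of_forall fun x => ?_)
  rw [Real.norm_eq_abs, abs_mul]
  simp only [Pi.add_apply]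
  nlinarith [sq_abs (f x), sq_abs (g x), sq_nonneg (|f x| - |g x|), abs_nonneg (f x), abs_nonneg (g x)]

lemma aux_integral_sq_le_of_tail {Ω : Type*} [MeasurableSpace Ω] (P : Measure Ω)
    [IsProbabilityMeasure P] (Z : Ω → ℝ) (hZm : AEMeasurable Z P)
    (hZint : Integrable (fun ω => Z ω ^ 2) P)
    (α : ℝ) (hα : 0 < α)
    (htail : ∀ r > (0:ℝ), P {ω | |Z ω| > r} ≤ ENNReal.ofReal (2 * Real.exp (-(r ^ 2 * α)))) :
    ∫ ω, Z ω ^ 2 ∂P ≤ 2 / α := by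
  have h1 : ∫ ω, Z ω ^ 2 ∂P = (∫⁻ ω, ENNReal.ofReal (Z ω ^ 2) ∂P).toReal :=
    integral_eq_lintegral_of_nonneg_ae (Filter.Eventually.of_forall fun ω => sq_nonneg _)
      hZint.aestronglyMeasurable
  have h2 : ∫⁻ ω, ENNReal.ofReal (Z ω ^ 2) ∂P = ∫⁻ t in Set.Ioi (0:ℝ), P {ω | t < Z ω ^ 2} :=
    lintegral_eq_lintegral_meas_lt P (Filter.Eventually.of_forall fun ω => sq_nonneg _)
      (hZm.pow_const 2)
  have h3 : ∫⁻ t in Set.Ioi (0:ℝ), P {ω | t < Z ω ^ 2}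
      ≤ ∫⁻ t in Set.Ioi (0:ℝ), ENNReal.ofReal (2 * Real.exp (-(t * α))) := by
    refine lintegral_mono_ae ?_
    filter_upwards [ae_restrict_mem measurableSet_Ioi] with t ht
    have hset : {ω | t < Z ω ^ 2} = {ω | |Z ω| > Real.sqrt t} := by
      ext ω
      simp only [Set.mem_setOf_eq, gt_iff_lt, ← Real.sqrt_sq_eq_abs]
      exact ⟨fun h => Real.sqrt_lt_sqrt ht.le h, fun h => (Real.sqrt_lt_sqrt_iff ht.le).1 h⟩
    rw [hset]
    have := htail (Real.sqrt t) (Real.sqrt_pos.2 ht)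
    rwa [Real.sq_sqrt ht.le] at this
  have hIntExp : IntegrableOn (fun t : ℝ => 2 * Real.exp (-(t * α))) (Set.Ioi (0:ℝ)) := by
    have := (exp_neg_integrableOn_Ioi 0 hα).const_mul 2
    simpa [mul_comm, IntegrableOn] using this
  have h4 : ∫⁻ t in Set.Ioi (0:ℝ), ENNReal.ofReal (2 * Real.exp (-(t * α)))
      = ENNReal.ofReal (∫ t in Set.Ioi (0:ℝ), 2 * Real.exp (-(t * α))) := by
    rw [← ofReal_integral_eq_lintegral_ofReal hIntExp
      (Filter.Eventually.of_forall fun t => by positivity)]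
  have h5 : ∫ t in Set.Ioi (0:ℝ), 2 * Real.exp (-(t * α)) = 2 / α := by
    rw [MeasureTheory.integral_const_mul]
    have : ∫ t in Set.Ioi (0:ℝ), Real.exp (-(t * α))
        = α⁻¹ • ∫ x in Set.Ioi ((0:ℝ) * α), Real.exp (-x) :=
      integral_comp_mul_right_Ioi (fun x => Real.exp (-x)) 0 hα
    rw [this, zero_mul, integral_exp_neg_Ioi, neg_zero, Real.exp_zero, smul_eq_mul, mul_one]
    rw [div_eq_mul_inv]
  rw [h1, h2]
  calc (∫⁻ t in Set.Ioi (0:ℝ), P {ω | t < Z ω ^ 2}).toReal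
      ≤ (ENNReal.ofReal (2 / α)).toReal := by
        refine ENNReal.toReal_mono ENNReal.ofReal_ne_top ?_
        rw [← h5, ← h4]; exact h3
    _ = 2 / α := ENNReal.toReal_ofReal (by positivity)

/-- Risk bound on the projection estimator `f̂_m` of the common density `f` of the sample
`X₁, …, Xₙ`, under the concentration hypothesis (C') for the empirical process.
The minimum over `t ∈ S_m` of the bias term is expressed by quantifying over the
coefficients `a` of an arbitrary element `t = ∑ j, a j • φ j` of `S_m`. -/
theorem projection_estimator_risk_bound
    {Ω : Type*} [MeasurableSpace Ω] (P : Measure Ω) [IsProbabilityMeasure P]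
    (I : Set ℝ) (hImeas : MeasurableSet I) (hIint : I.OrdConnected)
    (m n : ℕ) (hm : 1 ≤ m) (hn : 1 ≤ n)
    -- the orthonormal family φ_0, …, φ_{m-1} of bounded Lipschitz functions supported in I
    (φ : ℕ → ℝ → ℝ) (K : ℕ → ℝ≥0)
    (hbdd : ∀ j < m, ∃ Cb : ℝ, ∀ x, |φ j x| ≤ Cb)
    (hlip : ∀ j < m, LipschitzWith (K j) (φ j))
    (hsupp : ∀ j < m, ∀ x ∉ I, φ j x = 0)
    (horth : ∀ j < m, ∀ k < m, (∫ x in I, φ j x * φ k x) = if j = k then (1 : ℝ) else 0)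
    (L : ℝ) (hL : L = ∑ j ∈ Finset.range m, (K j : ℝ) ^ 2)
    -- the identically distributed sample, with common density f ∈ L²(ℝ)
    (X : Fin n → Ω → ℝ) (hX : ∀ i, Measurable (X i))
    (f : ℝ → ℝ) (hfmeas : Measurable f) (hf0 : ∀ x, 0 ≤ f x)
    (hlaw : ∀ i, Measure.map (X i) P = volume.withDensity fun x => ENNReal.ofReal (f x))
    (hfL2 : MemLp f 2 volume)
    -- hypothesis (C')
    (c Δ H bH : ℝ) (hc : 0 < c) (hΔ : 0 < Δ) (hH : H ∈ Set.Ioo (0 : ℝ) 1)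
    (hbH : bH = min 1 (2 - 2 * H))
    (hC' : ∀ (ψ : ℝ → ℝ) (Kψ : ℝ≥0), LipschitzWith Kψ ψ →
        (∀ i, Integrable (fun ω => ψ (X i ω)) P) →
        ∀ r > (0 : ℝ),
          P {ω | |(n : ℝ)⁻¹ * ∑ i, (ψ (X i ω) - ∫ ω', ψ (X i ω') ∂P)| > r}
            ≤ ENNReal.ofReal
                (2 * Real.exp (-(r ^ 2 / (c * (Kψ : ℝ) ^ 2)) * ((n : ℝ) * Δ) ^ bH)))
    -- the projection estimator
    (fhat : Ω → ℝ → ℝ)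
    (hfhat : ∀ ω x,
      fhat ω x = ∑ j ∈ Finset.range m, ((n : ℝ)⁻¹ * ∑ i, φ j (X i ω)) * φ j x) :
    ∀ a : ℕ → ℝ,
      (∫ ω, (∫ x in I, (fhat ω x - f x) ^ 2) ∂P)
        ≤ (∫ x in I, ((∑ j ∈ Finset.range m, a j * φ j x) - f x) ^ 2)
            + 2 * c * (m : ℝ) * L / ((n : ℝ) * Δ) ^ bH := by
  intro a
  have hn0 : (n : ℝ) ≠ 0 := Nat.cast_ne_zero.mpr (by omega)
  have hnpos : (0:ℝ) < n := by positivity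
  have hD : (0:ℝ) < ((n : ℝ) * Δ) ^ bH := Real.rpow_pos_of_pos (by positivity) _
  set D : ℝ := ((n : ℝ) * Δ) ^ bH with hDdef
  -- measurability of the φ j
  have hφmeas : ∀ j < m, Measurable (φ j) := fun j hj => (hlip j hj).continuous.measurable
  -- L² properties on I
  have hφsq : ∀ j < m, Integrable (fun x => φ j x * φ j x) (volume.restrict I) := by
    intro j hj
    by_contra hcon
    have h0 := integral_undef hcon
    rw [horth j hj j hj] at h0
    simpa using h0
  have hφL2 : ∀ j < m, MemLp (φ j) 2 (volume.restrict I) := by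
    intro j hj
    exact (memLp_two_iff_integrable_sq (hφmeas j hj).aestronglyMeasurable).2
      (by simpa [pow_two] using hφsq j hj)
  have hfI2 : MemLp f 2 (volume.restrict I) := hfL2.restrict I
  have hφφint : ∀ j < m, ∀ k < m,
      Integrable (fun x => φ j x * φ k x) (volume.restrict I) :=
    fun j hj k hk => aux_mul_integrable (hφL2 j hj) (hφL2 k hk)
  have hφfint : ∀ j < m, Integrable (fun x => φ j x * f x) (volume.restrict I) :=
    fun j hj => aux_mul_integrable (hφL2 j hj) hfI2
  have hf2int : Integrable (fun x => f x ^ 2) (volume.restrict I) := hfI2.integrable_sq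
  -- true coefficients
  set θ : ℕ → ℝ := fun j => ∫ x in I, φ j x * f x with hθdef
  -- the expansion of the L² distance
  have expand : ∀ b : ℕ → ℝ,
      (∫ x in I, ((∑ j ∈ Finset.range m, b j * φ j x) - f x) ^ 2)
        = (∑ j ∈ Finset.range m, (b j) ^ 2)
          - 2 * (∑ j ∈ Finset.range m, b j * θ j) + ∫ x in I, f x ^ 2 := by
    intro b
    have hgL2 : MemLp (fun x => ∑ j ∈ Finset.range m, b j * φ j x) 2 (volume.restrict I) := by
      exact memLp_finset_sum (Finset.range m)
        (fun j hj => (hφL2 j (Finset.mem_range.1 hj)).const_mul (b j))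
    have hgg : Integrable (fun x => (∑ j ∈ Finset.range m, b j * φ j x)
        * (∑ j ∈ Finset.range m, b j * φ j x)) (volume.restrict I) :=
      aux_mul_integrable hgL2 hgL2
    have hgf : Integrable (fun x => (∑ j ∈ Finset.range m, b j * φ j x) * f x)
        (volume.restrict I) := aux_mul_integrable hgL2 hfI2
    have hrw : (fun x : ℝ => ((∑ j ∈ Finset.range m, b j * φ j x) - f x) ^ 2)
        = fun x => ((∑ j ∈ Finset.range m, b j * φ j x) * (∑ j ∈ Finset.range m, b j * φ j x)
            - 2 * ((∑ j ∈ Finset.range m, b j * φ j x) * f x)) + f x ^ 2 := by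
      funext x; ring
    have hsub : Integrable (fun x => (∑ j ∈ Finset.range m, b j * φ j x)
        * (∑ j ∈ Finset.range m, b j * φ j x)
        - 2 * ((∑ j ∈ Finset.range m, b j * φ j x) * f x)) (volume.restrict I) :=
      hgg.sub (hgf.const_mul 2)
    rw [hrw, integral_add hsub hf2int,
      integral_sub hgg (hgf.const_mul 2), integral_const_mul]
    have hGG : (∫ x in I, (∑ j ∈ Finset.range m, b j * φ j x)
        * (∑ j ∈ Finset.range m, b j * φ j x)) = ∑ j ∈ Finset.range m, (b j) ^ 2 := by
      have hrw2 : (fun x : ℝ => (∑ j ∈ Finset.range m, b j * φ j x)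
          * (∑ j ∈ Finset.range m, b j * φ j x))
          = fun x => ∑ j ∈ Finset.range m, ∑ k ∈ Finset.range m,
              (b j * b k) * (φ j x * φ k x) := by
        funext x
        rw [Finset.sum_mul_sum]
        exact Finset.sum_congr rfl fun j _ => Finset.sum_congr rfl fun k _ => by ring
      rw [hrw2, integral_finset_sum]
      · have : ∀ j ∈ Finset.range m,
            (∫ x in I, ∑ k ∈ Finset.range m, (b j * b k) * (φ j x * φ k x))
              = (b j) ^ 2 := by
          intro j hj
          rw [integral_finset_sum]
          · have : ∀ k ∈ Finset.range m,
                (∫ x in I, (b j * b k) * (φ j x * φ k x))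
                  = (b j * b k) * (if j = k then (1:ℝ) else 0) := by
              intro k hk
              rw [integral_const_mul, horth j (Finset.mem_range.1 hj) k (Finset.mem_range.1 hk)]
            rw [Finset.sum_congr rfl this]
            simp [Finset.sum_ite_eq, hj, pow_two]
          · intro k hk
            exact (hφφint j (Finset.mem_range.1 hj) k (Finset.mem_range.1 hk)).const_mul _
        rw [Finset.sum_congr rfl this]
      · intro j hj
        refine integrable_finset_sum _ (fun k hk => ?_)
        exact (hφφint j (Finset.mem_range.1 hj) k (Finset.mem_range.1 hk)).const_mul _
    have hGF : (∫ x in I, (∑ j ∈ Finset.range m, b j * φ j x) * f x)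
        = ∑ j ∈ Finset.range m, b j * θ j := by
      have hrw3 : (fun x : ℝ => (∑ j ∈ Finset.range m, b j * φ j x) * f x)
          = fun x => ∑ j ∈ Finset.range m, b j * (φ j x * f x) := by
        funext x
        rw [Finset.sum_mul]
        exact Finset.sum_congr rfl fun j _ => by ring
      rw [hrw3, integral_finset_sum]
      · exact Finset.sum_congr rfl fun j hj => by
          rw [integral_const_mul]
      · intro j hj
        exact (hφfint j (Finset.mem_range.1 hj)).const_mul _
    rw [hGG, hGF]
  -- constant part
  set Cst : ℝ := (∫ x in I, f x ^ 2) - ∑ j ∈ Finset.range m, (θ j) ^ 2 with hCst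
  have algebra_id : ∀ b : ℕ → ℝ,
      (∑ j ∈ Finset.range m, (b j) ^ 2) - 2 * (∑ j ∈ Finset.range m, b j * θ j)
          + (∫ x in I, f x ^ 2)
        = Cst + ∑ j ∈ Finset.range m, (b j - θ j) ^ 2 := by
    intro b
    have h : ∑ j ∈ Finset.range m, (b j - θ j) ^ 2
        = (∑ j ∈ Finset.range m, (b j) ^ 2)
          - 2 * (∑ j ∈ Finset.range m, b j * θ j) + ∑ j ∈ Finset.range m, (θ j) ^ 2 := by
      rw [Finset.mul_sum, ← Finset.sum_sub_distrib, ← Finset.sum_add_distrib]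
      exact Finset.sum_congr rfl fun j _ => by ring
    rw [hCst, h]; ring
  -- the estimated coefficients
  set θhat : ℕ → Ω → ℝ := fun j ω => (n : ℝ)⁻¹ * ∑ i, φ j (X i ω) with hθhat
  have hθhatmeas : ∀ j < m, Measurable (θhat j) := by
    intro j hj
    exact measurable_const.mul (Finset.measurable_sum _ fun i _ => (hφmeas j hj).comp (hX i))
  have hφXint : ∀ j < m, ∀ i, Integrable (fun ω => φ j (X i ω)) P := by
    intro j hj i
    obtain ⟨Cb, hCb⟩ := hbdd j hj
    exact Integrable.mono' (integrable_const Cb)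
      ((hφmeas j hj).comp (hX i)).aestronglyMeasurable
      (Filter.Eventually.of_forall fun ω => by simpa [Real.norm_eq_abs] using hCb (X i ω))
  -- the true coefficient is the mean of the estimated one
  have hθeq : ∀ j < m, ∀ i, ∫ ω, φ j (X i ω) ∂P = θ j := by
    intro j hj i
    have h1 : ∫ ω, φ j (X i ω) ∂P = ∫ x, φ j x ∂(Measure.map (X i) P) :=
      (integral_map (hX i).aemeasurable (hφmeas j hj).aestronglyMeasurable).symm
    rw [h1, hlaw i]
    have h2 : (volume.withDensity fun x => ENNReal.ofReal (f x))
        = volume.withDensity fun x => ((f x).toNNReal : ℝ≥0∞) := rfl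
    rw [h2, integral_withDensity_eq_integral_smul (hfmeas.real_toNNReal)]
    have h3 : (fun x => (f x).toNNReal • φ j x) = fun x => φ j x * f x := by
      funext x
      rw [NNReal.smul_def, Real.coe_toNNReal _ (hf0 x), smul_eq_mul]
      ring
    rw [h3]
    rw [← setIntegral_eq_integral_of_forall_compl_eq_zero
      (fun x hx => by rw [hsupp j hj x hx, zero_mul])]
  -- rewriting the centered empirical mean
  have hcenter : ∀ j < m, ∀ ω, θhat j ω - θ j
      = (n : ℝ)⁻¹ * ∑ i, (φ j (X i ω) - ∫ ω', φ j (X i ω') ∂P) := by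
    intro j hj ω
    have h1 : ∑ i, (φ j (X i ω) - ∫ ω', φ j (X i ω') ∂P)
        = ∑ i, (φ j (X i ω) - θ j) := by
      exact Finset.sum_congr rfl fun i _ => by rw [hθeq j hj i]
    rw [h1, Finset.sum_sub_distrib, Finset.sum_const, Finset.card_univ, Fintype.card_fin,
      nsmul_eq_mul, mul_sub, hθhat]
    simp only []
    rw [inv_mul_cancel_left₀ hn0]
  -- integrability of the squared deviations
  have hZsqint : ∀ j < m, Integrable (fun ω => (θhat j ω - θ j) ^ 2) P := by
    intro j hj
    obtain ⟨Cb, hCb⟩ := hbdd j hj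
    have hCb0 : 0 ≤ Cb := le_trans (abs_nonneg _) (hCb 0)
    have hbound : ∀ ω, |θhat j ω - θ j| ≤ Cb + |θ j| := by
      intro ω
      have h1 : |θhat j ω| ≤ Cb := by
        rw [hθhat]
        simp only []
        rw [abs_mul, abs_inv, Nat.abs_cast]
        have h2 : |∑ i, φ j (X i ω)| ≤ ∑ i : Fin n, Cb :=
          le_trans (Finset.abs_sum_le_sum_abs _ _)
            (Finset.sum_le_sum fun i _ => hCb (X i ω))
        rw [Finset.sum_const, Finset.card_univ, Fintype.card_fin, nsmul_eq_mul] at h2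
        calc (n:ℝ)⁻¹ * |∑ i, φ j (X i ω)| ≤ (n:ℝ)⁻¹ * ((n:ℝ) * Cb) := by
              apply mul_le_mul_of_nonneg_left h2 (by positivity)
          _ = Cb := by field_simp
      calc |θhat j ω - θ j| ≤ |θhat j ω| + |θ j| := abs_sub _ _
        _ ≤ Cb + |θ j| := by linarith
    refine Integrable.mono' (integrable_const ((Cb + |θ j|) ^ 2))
      (((hθhatmeas j hj).sub measurable_const).pow_const 2).aestronglyMeasurable
      (Filter.Eventually.of_forall fun ω => ?_)
    rw [Real.norm_eq_abs, abs_of_nonneg (sq_nonneg _), ← sq_abs]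
    exact pow_le_pow_left₀ (abs_nonneg _) (hbound ω) 2
  -- variance bound for each coefficient
  have hvar : ∀ j < m, ∫ ω, (θhat j ω - θ j) ^ 2 ∂P ≤ 2 * c * ((K j : ℝ)) ^ 2 / D := by
    intro j hj
    by_cases hK : (K j : ℝ) = 0
    · -- φ j is constant, the deviation vanishes
      have hKj : K j = 0 := by exact_mod_cast hK
      have hconst : ∀ x, φ j x = φ j 0 := by
        intro x
        have := (hlip j hj).dist_le_mul x 0
        rw [hKj] at this
        simpa [dist_le_zero] using this
      have hθ0 : θ j = φ j 0 := by
        have i0 : Fin n := ⟨0, hn⟩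
        rw [← hθeq j hj i0]
        have : (fun ω => φ j (X i0 ω)) = fun _ => φ j 0 := funext fun ω => hconst _
        simp [this]
      have hZ0 : ∀ ω, (θhat j ω - θ j) ^ 2 = 0 := by
        intro ω
        have : θhat j ω = φ j 0 := by
          rw [hθhat]
          simp only []
          rw [show (∑ i, φ j (X i ω)) = ∑ i : Fin n, φ j 0 from
            Finset.sum_congr rfl fun i _ => hconst _]
          rw [Finset.sum_const, Finset.card_univ, Fintype.card_fin, nsmul_eq_mul,
            inv_mul_cancel_left₀ hn0]
        rw [this, hθ0]
        ring
      have : ∫ ω, (θhat j ω - θ j) ^ 2 ∂P = 0 := by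
        rw [show (fun ω => (θhat j ω - θ j) ^ 2) = fun _ => (0:ℝ) from funext hZ0]
        simp
      rw [this, hK]
      positivity
    · have hKpos : (0:ℝ) < (K j : ℝ) := lt_of_le_of_ne (K j).coe_nonneg (Ne.symm hK)
      have hα : (0:ℝ) < D / (c * (K j : ℝ) ^ 2) := by positivity
      have htail : ∀ r > (0:ℝ), P {ω | |θhat j ω - θ j| > r}
          ≤ ENNReal.ofReal (2 * Real.exp (-(r ^ 2 * (D / (c * (K j : ℝ) ^ 2))))) := by
        intro r hr
        have hset : {ω | |θhat j ω - θ j| > r}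
            = {ω | |(n : ℝ)⁻¹ * ∑ i, (φ j (X i ω) - ∫ ω', φ j (X i ω') ∂P)| > r} := by
          ext ω
          rw [Set.mem_setOf_eq, Set.mem_setOf_eq, hcenter j hj ω]
        rw [hset]
        have := hC' (φ j) (K j) (hlip j hj) (hφXint j hj) r hr
        convert this using 3
        rw [hDdef]
        field_simp
      have := aux_integral_sq_le_of_tail P (fun ω => θhat j ω - θ j)
        ((hθhatmeas j hj).sub measurable_const).aemeasurable (hZsqint j hj)
        (D / (c * (K j : ℝ) ^ 2)) hα htail
      calc ∫ ω, (θhat j ω - θ j) ^ 2 ∂P ≤ 2 / (D / (c * (K j : ℝ) ^ 2)) := this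
        _ = 2 * c * ((K j : ℝ)) ^ 2 / D := by
            field_simp
  -- pointwise rewriting of the risk
  have hω : ∀ ω, (∫ x in I, (fhat ω x - f x) ^ 2)
      = Cst + ∑ j ∈ Finset.range m, (θhat j ω - θ j) ^ 2 := by
    intro ω
    have h1 : (∫ x in I, (fhat ω x - f x) ^ 2)
        = ∫ x in I, ((∑ j ∈ Finset.range m, (θhat j ω) * φ j x) - f x) ^ 2 := by
      exact integral_congr_ae (Filter.Eventually.of_forall fun x => by
        simp only [hfhat, hθhat])
    rw [h1, expand (fun j => θhat j ω), algebra_id (fun j => θhat j ω)]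
  -- putting everything together
  have hLHS : (∫ ω, (∫ x in I, (fhat ω x - f x) ^ 2) ∂P)
      = Cst + ∑ j ∈ Finset.range m, ∫ ω, (θhat j ω - θ j) ^ 2 ∂P := by
    rw [integral_congr_ae (Filter.Eventually.of_forall hω)]
    rw [integral_add (integrable_const Cst)
      (integrable_finset_sum _ fun j hj => hZsqint j (Finset.mem_range.1 hj))]
    rw [integral_const, integral_finset_sum _ fun j hj => hZsqint j (Finset.mem_range.1 hj)]
    simp
  have hRHS : (∫ x in I, ((∑ j ∈ Finset.range m, a j * φ j x) - f x) ^ 2)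
      = Cst + ∑ j ∈ Finset.range m, (a j - θ j) ^ 2 := by
    rw [expand a, algebra_id a]
  rw [hLHS, hRHS]
  have hsum : ∑ j ∈ Finset.range m, ∫ ω, (θhat j ω - θ j) ^ 2 ∂P
      ≤ 2 * c * L / D := by
    calc ∑ j ∈ Finset.range m, ∫ ω, (θhat j ω - θ j) ^ 2 ∂P
        ≤ ∑ j ∈ Finset.range m, 2 * c * ((K j : ℝ)) ^ 2 / D :=
          Finset.sum_le_sum fun j hj => hvar j (Finset.mem_range.1 hj)
      _ = 2 * c * L / D := by
          rw [hL, Finset.mul_sum, Finset.sum_div]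
  have hbias : (0:ℝ) ≤ ∑ j ∈ Finset.range m, (a j - θ j) ^ 2 :=
    Finset.sum_nonneg fun j _ => sq_nonneg _
  have hL0 : (0:ℝ) ≤ L := hL ▸ Finset.sum_nonneg fun j _ => sq_nonneg _
  have hm1 : (1:ℝ) ≤ (m:ℝ) := by exact_mod_cast hm
  have hfinal : 2 * c * L / D ≤ 2 * c * (m:ℝ) * L / D := by
    have hnum : 2 * c * L ≤ 2 * c * (m:ℝ) * L := by
      nlinarith [mul_nonneg (mul_nonneg hc.le hL0) (sub_nonneg.mpr hm1)]
    exact (div_le_div_iff_of_pos_right hD).mpr hnum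
  linarith
end

section
/- (Deterministic oracle decomposition.) Let I ⊆ ℝ be an interval, (φⱼ)_{j≥1} bounded functions ℝ → ℝ vanishing outside I and orthonormal in L²(I,dx), S_m := span(φ₁,…,φ_m), and f ∈ L²(I,dx) with f_m its orthogonal projection onto S_m. Let x₁,…,xₙ ∈ ℝ, and define γ̂(φ) := ‖φ‖²_{L²(I)} − (2/n)Σ_{i=1}^n φ(x_i), ν(φ) := (1/n)Σ_{i=1}^n φ(x_i) − ⟨φ,f⟩_{L²(I)}, and f̂_m := Σ_{j=1}^m ((1/n)Σᵢφⱼ(x_i))φⱼ. Let 𝓜 be a set of positive integers, L(m) := Σ_{j=1}^m ‖φⱼ‖_Lip² (each φⱼ Lipschitz), N > 0, 𝔎 > 0, pen(m) := 𝔎(m+1)L(m)/N and p(m,m̄) := (𝔎/4)·((max(m,m̄))+1)·L(max(m,m̄))/N. Suppose m̂ ∈ 𝓜 satisfies γ̂(f̂_{m̂}) + pen(m̂) ≤ γ̂(f̂_m) + pen(m) for all m ∈ 𝓜. Then for every m ∈ 𝓜: ‖f̂_{m̂} − f‖²_{L²(I)} ≤ 3‖f_m − f‖²_{L²(I)} +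 4·pen(m) + 8·Σ_{m̄∈𝓜} ( [sup_{φ∈S_{max(m,m̄)}, ‖φ‖_{L²(I)}=1} |ν(φ)|]² − p(m,m̄) )₊, where (u)₊ := max(u,0). -/
open MeasureTheory Real
open scoped NNReal ENNReal BigOperators

set_option maxHeartbeats 1000000

lemma l2_mul_integrable {α : Type*} [MeasurableSpace α] {μ : Measure α}
    {g h : α → ℝ} (hg : MemLp g 2 μ) (hh : MemLp h 2 μ) :
    Integrable (fun x => g x * h x) μ := by
  refine (hg.integrable_sq.add hh.integrable_sq).mono'
    (hg.aestronglyMeasurable.mul hh.aestronglyMeasurable) ?_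
  filter_upwards with y
  have h0 : ‖g y * h y‖ = |g y| * |h y| := by rw [Real.norm_eq_abs, abs_mul]
  rw [h0]; simp only [Pi.add_apply]
  nlinarith [sq_nonneg (|g y| - |h y|), sq_abs (g y), sq_abs (h y),
    abs_nonneg (g y), abs_nonneg (h y)]

/-- Deterministic (pathwise) oracle decomposition: Step 1 of the proof of the oracle
inequality. The sum over `m̄ ∈ 𝓜` and the positive parts `(·)₊` are taken in `ℝ≥0∞`
(via `ENNReal.ofReal`), so that a possibly infinite sum is handled correctly. -/
theorem deterministic_oracle_decomposition
    (I : Set ℝ) (hImeas : MeasurableSet I) (hIint : I.OrdConnected)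
    (φ : ℕ → ℝ → ℝ) (K : ℕ → ℝ≥0)
    (hbdd : ∀ j, ∃ Cb : ℝ, ∀ x, |φ j x| ≤ Cb)
    (hlip : ∀ j, LipschitzWith (K j) (φ j))
    (hsupp : ∀ j, ∀ x ∉ I, φ j x = 0)
    (horth : ∀ j k, (∫ x in I, φ j x * φ k x) = if j = k then (1 : ℝ) else 0)
    (f : ℝ → ℝ) (hf : MemLp f 2 (volume.restrict I))
    (n : ℕ) (hn : 1 ≤ n) (x : Fin n → ℝ)
    -- the contrast γ̂, the empirical process ν, the estimators f̂_m
    -- and the projections f_m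
    (ghat : (ℝ → ℝ) → ℝ)
    (hghat : ∀ g : ℝ → ℝ,
      ghat g = (∫ y in I, (g y) ^ 2) - 2 * ((n : ℝ)⁻¹ * ∑ i, g (x i)))
    (ν : (ℝ → ℝ) → ℝ)
    (hν : ∀ g : ℝ → ℝ,
      ν g = (n : ℝ)⁻¹ * ∑ i, g (x i) - ∫ y in I, g y * f y)
    (fhat : ℕ → ℝ → ℝ)
    (hfhat : ∀ m y,
      fhat m y = ∑ j ∈ Finset.range m, ((n : ℝ)⁻¹ * ∑ i, φ j (x i)) * φ j y)
    (fproj : ℕ → ℝ → ℝ)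
    (hfproj : ∀ m y,
      fproj m y = ∑ j ∈ Finset.range m, (∫ z in I, f z * φ j z) * φ j y)
    -- the collection of models, the penalty and p(m, m̄)
    (𝓜 : Set ℕ) (h𝓜 : ∀ m ∈ 𝓜, 1 ≤ m)
    (L : ℕ → ℝ) (hL : ∀ m, L m = ∑ j ∈ Finset.range m, (K j : ℝ) ^ 2)
    (N 𝔎 : ℝ) (hN : 0 < N) (h𝔎 : 0 < 𝔎)
    (pen : ℕ → ℝ) (hpen : ∀ m, pen m = 𝔎 * ((m : ℝ) + 1) * L m / N)
    (p : ℕ → ℕ → ℝ)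
    (hp : ∀ m m', p m m' = (𝔎 / 4) * ((max m m' : ℕ) + 1 : ℝ) * L (max m m') / N)
    -- the selected model
    (mhat : ℕ) (hmhat : mhat ∈ 𝓜)
    (hsel : ∀ m ∈ 𝓜, ghat (fhat mhat) + pen mhat ≤ ghat (fhat m) + pen m) :
    ∀ m ∈ 𝓜,
      ENNReal.ofReal (∫ y in I, (fhat mhat y - f y) ^ 2)
        ≤ ENNReal.ofReal (3 * (∫ y in I, (fproj m y - f y) ^ 2) + 4 * pen m)
          + 8 * ∑' m' : 𝓜,
              ENNReal.ofReal
                ((sSup ((fun ψ : ℝ → ℝ => |ν ψ|) ''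
                    {ψ | ψ ∈ Submodule.span ℝ (φ '' Set.Iio (max m (m' : ℕ)))
                      ∧ (∫ y in I, (ψ y) ^ 2) = 1})) ^ 2
                  - p m (m' : ℕ)) := by
  intro m hm
  -- basic measurability / integrability facts
  have hφmeas : ∀ j, AEStronglyMeasurable (φ j) (volume.restrict I) :=
    fun j => (hlip j).continuous.aestronglyMeasurable
  have hφ2 : ∀ j, MemLp (φ j) 2 (volume.restrict I) := by
    intro j
    refine (memLp_two_iff_integrable_sq (hφmeas j)).2 ?_
    have h1 : Integrable (fun y => φ j y * φ j y) (volume.restrict I) := by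
      by_contra h
      have h2 := horth j j
      rw [MeasureTheory.integral_undef h] at h2
      simp at h2
    simpa [sq] using h1
  -- the coefficients
  set a : ℕ → ℝ := fun j => (n : ℝ)⁻¹ * ∑ i, φ j (x i) with ha
  set b : ℕ → ℝ := fun j => ∫ z in I, f z * φ j z with hb
  -- membership of finite combinations in L²
  have hGmem : ∀ (c : ℕ → ℝ) (M : ℕ),
      MemLp (fun y => ∑ j ∈ Finset.range M, c j * φ j y) 2 (volume.restrict I) := by
    intro c M
    exact memLp_finset_sum (Finset.range M) (fun j _ => ((hφ2 j).const_mul (c j)))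
  -- integral of square of a combination
  have hG2 : ∀ (c : ℕ → ℝ) (M : ℕ),
      (∫ y in I, (∑ j ∈ Finset.range M, c j * φ j y) ^ 2)
        = ∑ j ∈ Finset.range M, (c j) ^ 2 := by
    intro c M
    have h1 : ∀ y : ℝ, (∑ j ∈ Finset.range M, c j * φ j y) ^ 2
        = ∑ j ∈ Finset.range M, ∑ k ∈ Finset.range M, (c j * c k) * (φ j y * φ k y) := by
      intro y
      rw [sq, Finset.sum_mul_sum]
      exact Finset.sum_congr rfl fun j _ => Finset.sum_congr rfl fun k _ => by ring
    simp only [h1]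
    rw [integral_finset_sum _ (fun j _ => integrable_finset_sum _
      (fun k _ => ((l2_mul_integrable (hφ2 j) (hφ2 k)).const_mul _)))]
    refine Finset.sum_congr rfl fun j hj => ?_
    rw [integral_finset_sum _ (fun k _ => ((l2_mul_integrable (hφ2 j) (hφ2 k)).const_mul _))]
    have h2 : ∀ k ∈ Finset.range M,
        (∫ y in I, (c j * c k) * (φ j y * φ k y)) = if j = k then c j * c k else 0 := by
      intro k _
      rw [MeasureTheory.integral_const_mul, horth j k]
      split_ifs <;> simp
    rw [Finset.sum_congr rfl h2, Finset.sum_ite_eq (Finset.range M) j (fun k => c j * c k)]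
    simp only [hj, if_true, sq]
  -- integral of combination times f
  have hGf : ∀ (c : ℕ → ℝ) (M : ℕ),
      (∫ y in I, (∑ j ∈ Finset.range M, c j * φ j y) * f y)
        = ∑ j ∈ Finset.range M, c j * ∫ y in I, φ j y * f y := by
    intro c M
    have h1 : ∀ y : ℝ, (∑ j ∈ Finset.range M, c j * φ j y) * f y
        = ∑ j ∈ Finset.range M, c j * (φ j y * f y) := by
      intro y
      rw [Finset.sum_mul]
      exact Finset.sum_congr rfl fun j _ => by ring
    simp only [h1]
    rw [integral_finset_sum _ (fun j _ => (l2_mul_integrable (hφ2 j) hf).const_mul (c j))]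
    exact Finset.sum_congr rfl fun j _ => MeasureTheory.integral_const_mul _ _
  -- empirical sum of a combination
  have hGx : ∀ (c : ℕ → ℝ) (M : ℕ),
      (n : ℝ)⁻¹ * ∑ i, (∑ j ∈ Finset.range M, c j * φ j (x i))
        = ∑ j ∈ Finset.range M, c j * a j := by
    intro c M
    rw [Finset.sum_comm, Finset.mul_sum]
    refine Finset.sum_congr rfl fun j _ => ?_
    rw [← Finset.mul_sum]
    simp only [ha]
    ring
  have hGghat : ∀ (c : ℕ → ℝ) (M : ℕ),
      ghat (fun y => ∑ j ∈ Finset.range M, c j * φ j y)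
        = ∑ j ∈ Finset.range M, ((c j) ^ 2 - 2 * (c j * a j)) := by
    intro c M
    rw [hghat, hG2, hGx, Finset.mul_sum, ← Finset.sum_sub_distrib]
  have hGν : ∀ (c : ℕ → ℝ) (M : ℕ),
      ν (fun y => ∑ j ∈ Finset.range M, c j * φ j y)
        = ∑ j ∈ Finset.range M, c j * (a j - ∫ y in I, φ j y * f y) := by
    intro c M
    rw [hν, hGf, hGx, ← Finset.sum_sub_distrib]
    exact Finset.sum_congr rfl fun j _ => by ring
  -- identify the estimators/projections as combinations
  have hfa : fhat mhat = fun y => ∑ j ∈ Finset.range mhat, a j * φ j y :=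
    funext fun y => hfhat mhat y
  have hfam : fhat m = fun y => ∑ j ∈ Finset.range m, a j * φ j y :=
    funext fun y => hfhat m y
  have hfb : fproj m = fun y => ∑ j ∈ Finset.range m, b j * φ j y :=
    funext fun y => hfproj m y
  set M : ℕ := max m mhat with hM
  set d : ℕ → ℝ := fun j => (if j < mhat then a j else 0) - (if j < m then b j else 0) with hd
  -- extension of sums to range M
  have ext : ∀ (c : ℕ → ℝ) (m0 : ℕ), m0 ≤ M → ∀ y : ℝ,
      (∑ j ∈ Finset.range m0, c j * φ j y)
        = ∑ j ∈ Finset.range M, (if j < m0 then c j else 0) * φ j y := by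
    intro c m0 hm0 y
    rw [← Finset.sum_subset (Finset.range_subset_range.2 hm0)
      (fun j _ hj => by rw [if_neg (fun h => hj (Finset.mem_range.2 h)), zero_mul])]
    exact Finset.sum_congr rfl fun j hj => by rw [if_pos (Finset.mem_range.1 hj)]
  set u : ℝ → ℝ := fun y => ∑ j ∈ Finset.range M, d j * φ j y with hu'
  have hu : ∀ y, fhat mhat y - fproj m y = u y := by
    intro y
    simp only [hfa, hfb, hu']
    rw [ext a mhat (le_max_right m mhat) y, ext b m (le_max_left m mhat) y,
      ← Finset.sum_sub_distrib]
    exact Finset.sum_congr rfl fun j _ => by rw [hd]; ring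
  -- L² membership
  have hg1mem : MemLp (fhat mhat) 2 (volume.restrict I) := by rw [hfa]; exact hGmem a mhat
  have hg2mem : MemLp (fproj m) 2 (volume.restrict I) := by rw [hfb]; exact hGmem b m
  have humem : MemLp u 2 (volume.restrict I) := hGmem d M
  -- integrability of squares
  have isq1 : Integrable (fun y => (fhat mhat y - f y) ^ 2) (volume.restrict I) := by
    have := (hg1mem.sub hf).integrable_sq
    simpa [Pi.sub_apply] using this
  have isq2 : Integrable (fun y => (fproj m y - f y) ^ 2) (volume.restrict I) := by
    have := (hg2mem.sub hf).integrable_sq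
    simpa [Pi.sub_apply] using this
  have iu2 : Integrable (fun y => (u y) ^ 2) (volume.restrict I) := humem.integrable_sq
  -- expansion of the squared distance
  have expand : ∀ g : ℝ → ℝ, MemLp g 2 (volume.restrict I) →
      (∫ y in I, (g y - f y) ^ 2)
        = (∫ y in I, (g y) ^ 2) - 2 * (∫ y in I, g y * f y) + ∫ y in I, (f y) ^ 2 := by
    intro g hg
    have i1 : Integrable (fun y => (g y) ^ 2) (volume.restrict I) := hg.integrable_sq
    have i2 : Integrable (fun y => g y * f y) (volume.restrict I) := l2_mul_integrable hg hf
    have i3 := hf.integrable_sq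
    have i13 : Integrable (fun y => (g y) ^ 2 + (f y) ^ 2) (volume.restrict I) := i1.add i3
    have i2' : Integrable (fun y => 2 * (g y * f y)) (volume.restrict I) := i2.const_mul 2
    have h1 : ∀ y : ℝ, (g y - f y) ^ 2 = ((g y) ^ 2 + (f y) ^ 2) - 2 * (g y * f y) :=
      fun y => by ring
    simp only [h1]
    rw [integral_sub i13 i2', integral_add i1 i3, MeasureTheory.integral_const_mul]
    ring
  set A : ℝ := ∫ y in I, (fhat mhat y - f y) ^ 2 with hA
  set B : ℝ := ∫ y in I, (fproj m y - f y) ^ 2 with hB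
  have eA : A = ghat (fhat mhat) + 2 * ν (fhat mhat) + ∫ y in I, (f y) ^ 2 := by
    have h1 := expand (fhat mhat) hg1mem
    have h2 := hghat (fhat mhat)
    have h3 := hν (fhat mhat)
    rw [← hA] at h1
    linarith
  have eB : B = ghat (fproj m) + 2 * ν (fproj m) + ∫ y in I, (f y) ^ 2 := by
    have h1 := expand (fproj m) hg2mem
    have h2 := hghat (fproj m)
    have h3 := hν (fproj m)
    rw [← hB] at h1
    linarith
  -- the projection minimizes the contrast less than the empirical minimizer... rather:
  have hmin : ghat (fhat m) ≤ ghat (fproj m) := by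
    rw [hfam, hfb, hGghat, hGghat]
    refine Finset.sum_le_sum fun j _ => ?_
    nlinarith [sq_nonneg (a j - b j)]
  -- ν of the difference
  have hνu : ν (fhat mhat) - ν (fproj m) = ν u := by
    rw [hν (fhat mhat), hν (fproj m), hν u]
    have hsum : (∑ i, u (x i)) = (∑ i, fhat mhat (x i)) - ∑ i, fproj m (x i) := by
      rw [← Finset.sum_sub_distrib]
      exact Finset.sum_congr rfl fun i _ => (hu (x i)).symm
    have huf : ∀ y : ℝ, u y * f y = fhat mhat y * f y - fproj m y * f y := by
      intro y; rw [← hu y]; ring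
    have hint : (∫ y in I, u y * f y)
        = (∫ y in I, fhat mhat y * f y) - ∫ y in I, fproj m y * f y := by
      simp only [huf]
      exact integral_sub (l2_mul_integrable hg1mem hf) (l2_mul_integrable hg2mem hf)
    rw [hsum, hint]
    ring
  -- the supremum
  set SM : Set (ℝ → ℝ) :=
    {ψ | ψ ∈ Submodule.span ℝ (φ '' Set.Iio M) ∧ (∫ y in I, (ψ y) ^ 2) = 1} with hSM
  set χ : ℝ := sSup ((fun ψ : ℝ → ℝ => |ν ψ|) '' SM) with hχ
  -- representation of span members
  have hrep : ∀ ψ : ℝ → ℝ, ψ ∈ Submodule.span ℝ (φ '' Set.Iio M) →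
      ∃ c : ℕ → ℝ, ∀ y, ψ y = ∑ j ∈ Finset.range M, c j * φ j y := by
    intro ψ hψ
    have himg : φ '' Set.Iio M = Set.range (fun j : Fin M => φ j) := by
      ext g
      constructor
      · rintro ⟨j, hj, rfl⟩; exact ⟨⟨j, hj⟩, rfl⟩
      · rintro ⟨j, rfl⟩; exact ⟨j, j.2, rfl⟩
    rw [himg, Submodule.mem_span_range_iff_exists_fun] at hψ
    obtain ⟨c, hc⟩ := hψ
    refine ⟨fun j => if h : j < M then c ⟨j, h⟩ else 0, fun y => ?_⟩
    have h2 := congrFun hc y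
    simp only [Finset.sum_apply, Pi.smul_apply, smul_eq_mul] at h2
    rw [← h2, ← Fin.sum_univ_eq_sum_range]
    refine Finset.sum_congr rfl fun j _ => ?_
    simp [j.2]
  -- boundedness of the sup set
  have hbdda : BddAbove ((fun ψ : ℝ → ℝ => |ν ψ|) '' SM) := by
    refine ⟨∑ j ∈ Finset.range M, |a j - ∫ y in I, φ j y * f y|, ?_⟩
    rintro r ⟨ψ, ⟨hψspan, hψ1⟩, rfl⟩
    obtain ⟨c, hc⟩ := hrep ψ hψspan
    have hψfun : ψ = fun y => ∑ j ∈ Finset.range M, c j * φ j y := funext hc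
    have hψν : ν ψ = ∑ j ∈ Finset.range M, c j * (a j - ∫ y in I, φ j y * f y) := by
      rw [hψfun, hGν]
    have hc2 : (∑ j ∈ Finset.range M, (c j) ^ 2) = 1 := by
      have h4 : (∫ y in I, (ψ y) ^ 2) = ∑ j ∈ Finset.range M, (c j) ^ 2 := by
        rw [hψfun]; exact hG2 c M
      rw [← h4]; exact hψ1
    have hcle : ∀ j ∈ Finset.range M, |c j| ≤ 1 := by
      intro j hj
      have h5 : (c j) ^ 2 ≤ 1 := by
        rw [← hc2]; exact Finset.single_le_sum (fun k _ => sq_nonneg (c k)) hj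
      nlinarith [abs_nonneg (c j), sq_abs (c j)]
    calc |ν ψ| ≤ ∑ j ∈ Finset.range M, |c j * (a j - ∫ y in I, φ j y * f y)| := by
          rw [hψν]; exact Finset.abs_sum_le_sum_abs _ _
      _ ≤ ∑ j ∈ Finset.range M, |a j - ∫ y in I, φ j y * f y| := by
          refine Finset.sum_le_sum fun j hj => ?_
          rw [abs_mul]
          calc |c j| * |a j - ∫ y in I, φ j y * f y|
              ≤ 1 * |a j - ∫ y in I, φ j y * f y| :=
                mul_le_mul_of_nonneg_right (hcle j hj) (abs_nonneg _)
            _ = _ := one_mul _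
  set s : ℝ := ∑ j ∈ Finset.range M, (d j) ^ 2 with hs
  have hs_nonneg : 0 ≤ s := Finset.sum_nonneg fun j _ => sq_nonneg _
  have hνu_le : |ν u| ≤ χ * Real.sqrt s := by
    rcases eq_or_lt_of_le hs_nonneg with h0 | h0
    · -- s = 0, all coefficients vanish
      have hall : ∀ j ∈ Finset.range M, d j = 0 := by
        intro j hj
        have := (Finset.sum_eq_zero_iff_of_nonneg (fun k _ => sq_nonneg (d k))).1 h0.symm j hj
        exact pow_eq_zero_iff (by norm_num : (2:ℕ) ≠ 0) |>.mp this
      have : ν u = 0 := by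
        rw [hu', hGν]
        exact Finset.sum_eq_zero fun j hj => by rw [hall j hj, zero_mul]
      rw [this, ← h0, Real.sqrt_zero, mul_zero, abs_zero]
    · set t : ℝ := Real.sqrt s with ht
      have ht0 : 0 < t := Real.sqrt_pos.2 h0
      have ht2 : t ^ 2 = s := Real.sq_sqrt hs_nonneg
      set c : ℕ → ℝ := fun j => d j / t with hc
      set ψ : ℝ → ℝ := fun y => ∑ j ∈ Finset.range M, c j * φ j y with hψ
      have hψspan : ψ ∈ Submodule.span ℝ (φ '' Set.Iio M) := by
        have hψsum : ψ = ∑ j ∈ Finset.range M, c j • φ j := by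
          funext y
          simp [hψ, Finset.sum_apply, Pi.smul_apply, smul_eq_mul]
        rw [hψsum]
        exact Submodule.sum_mem _ fun j hj => Submodule.smul_mem _ _
          (Submodule.subset_span ⟨j, Finset.mem_range.1 hj, rfl⟩)
      have hψ1 : (∫ y in I, (ψ y) ^ 2) = 1 := by
        rw [hψ, hG2]
        have : ∀ j ∈ Finset.range M, (c j) ^ 2 = (d j) ^ 2 / t ^ 2 :=
          fun j _ => by rw [hc]; rw [div_pow]
        rw [Finset.sum_congr rfl this, ← Finset.sum_div, ht2, ← hs, div_self (ne_of_gt h0)]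
      have hψν : ν ψ = ν u / t := by
        rw [hψ, hGν, hu', hGν, Finset.sum_div]
        exact Finset.sum_congr rfl fun j _ => by rw [hc]; ring
      have hle : |ν ψ| ≤ χ := le_csSup hbdda ⟨ψ, ⟨hψspan, hψ1⟩, rfl⟩
      have : |ν u| = t * |ν ψ| := by
        rw [hψν, abs_div, abs_of_pos ht0]
        field_simp
      rw [this, mul_comm χ t]
      exact mul_le_mul_of_nonneg_left hle ht0.le
  -- ∫ u² = s and s ≤ 2A + 2B
  have hus : (∫ y in I, (u y) ^ 2) = s := hG2 d M
  have hsAB : s ≤ 2 * A + 2 * B := by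
    rw [← hus, hA, hB]
    have hpt : ∀ y : ℝ, (u y) ^ 2
        ≤ 2 * (fhat mhat y - f y) ^ 2 + 2 * (fproj m y - f y) ^ 2 := by
      intro y
      rw [← hu y]
      nlinarith [sq_nonneg ((fhat mhat y - f y) + (fproj m y - f y))]
    have i1' : Integrable (fun y => 2 * (fhat mhat y - f y) ^ 2) (volume.restrict I) :=
      isq1.const_mul 2
    have i2' : Integrable (fun y => 2 * (fproj m y - f y) ^ 2) (volume.restrict I) :=
      isq2.const_mul 2
    have iadd : Integrable
        (fun y => 2 * (fhat mhat y - f y) ^ 2 + 2 * (fproj m y - f y) ^ 2)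
        (volume.restrict I) := i1'.add i2'
    calc (∫ y in I, (u y) ^ 2)
        ≤ ∫ y in I, (2 * (fhat mhat y - f y) ^ 2 + 2 * (fproj m y - f y) ^ 2) :=
          integral_mono iu2 iadd hpt
      _ = 2 * (∫ y in I, (fhat mhat y - f y) ^ 2) + 2 * ∫ y in I, (fproj m y - f y) ^ 2 := by
          rw [integral_add i1' i2',
            MeasureTheory.integral_const_mul, MeasureTheory.integral_const_mul]
  -- 2 ν u ≤ s/4 + 4 χ²
  have h2νu : 2 * ν u ≤ s / 4 + 4 * χ ^ 2 := by
    have h1 : ν u ≤ |ν u| := le_abs_self _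
    have h2 : |ν u| ≤ χ * Real.sqrt s := hνu_le
    have h3 : (Real.sqrt s) ^ 2 = s := Real.sq_sqrt hs_nonneg
    nlinarith [sq_nonneg (Real.sqrt s / 2 - 2 * χ)]
  -- penalties
  have hpen_nonneg : ∀ k : ℕ, 0 ≤ pen k := by
    intro k
    rw [hpen, hL]
    have h1 : (0:ℝ) ≤ ∑ j ∈ Finset.range k, (K j : ℝ) ^ 2 :=
      Finset.sum_nonneg fun j _ => sq_nonneg _
    have h2 : (0:ℝ) ≤ (k : ℝ) + 1 := by positivity
    have := mul_nonneg (mul_nonneg h𝔎.le h2) h1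
    exact div_nonneg this hN.le
  have hpen4 : 4 * p m mhat ≤ pen m + pen mhat := by
    rw [hp]
    rcases max_cases m mhat with ⟨h1, h2⟩ | ⟨h1, h2⟩
    · rw [h1]
      have e : 4 * (𝔎 / 4 * ((m : ℝ) + 1) * L m / N) = pen m := by rw [hpen]; ring
      linarith [hpen_nonneg mhat, e.le]
    · rw [h1]
      have e : 4 * (𝔎 / 4 * ((mhat : ℝ) + 1) * L mhat / N) = pen mhat := by rw [hpen]; ring
      linarith [hpen_nonneg m, e.le]
  -- the real-valued inequality
  have hreal : A ≤ 3 * B + 4 * pen m + 8 * max (χ ^ 2 - p m mhat) 0 := by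
    have hsel' := hsel m hm
    have hmax := le_max_left (χ ^ 2 - p m mhat) (0 : ℝ)
    linarith [eA, eB, hmin, hνu, h2νu, hsAB, hpen4]
  -- conclude in ℝ≥0∞
  calc ENNReal.ofReal A
      ≤ ENNReal.ofReal (3 * B + 4 * pen m + 8 * max (χ ^ 2 - p m mhat) 0) :=
        ENNReal.ofReal_le_ofReal hreal
    _ ≤ ENNReal.ofReal (3 * B + 4 * pen m)
          + ENNReal.ofReal (8 * max (χ ^ 2 - p m mhat) 0) := ENNReal.ofReal_add_le
    _ = ENNReal.ofReal (3 * B + 4 * pen m) + 8 * ENNReal.ofReal (χ ^ 2 - p m mhat) := by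
        have e8 : ENNReal.ofReal (8 : ℝ) = 8 := by norm_num
        have emax : ENNReal.ofReal (max (χ ^ 2 - p m mhat) 0)
            = ENNReal.ofReal (χ ^ 2 - p m mhat) := by
          rcases le_total (χ ^ 2 - p m mhat) 0 with h | h
          · rw [max_eq_right h, ENNReal.ofReal_zero, ENNReal.ofReal_of_nonpos h]
          · rw [max_eq_left h]
        rw [ENNReal.ofReal_mul (by norm_num : (0:ℝ) ≤ 8), e8, emax]
    _ ≤ ENNReal.ofReal (3 * B + 4 * pen m)
          + 8 * ∑' m' : 𝓜,
              ENNReal.ofReal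
                ((sSup ((fun ψ : ℝ → ℝ => |ν ψ|) ''
                    {ψ | ψ ∈ Submodule.span ℝ (φ '' Set.Iio (max m (m' : ℕ)))
                      ∧ (∫ y in I, (ψ y) ^ 2) = 1})) ^ 2
                  - p m (m' : ℕ)) := by
        refine add_le_add_right (mul_le_mul_right ?_ 8) _
        have h6 := ENNReal.le_tsum (f := fun m' : 𝓜 =>
          ENNReal.ofReal
            ((sSup ((fun ψ : ℝ → ℝ => |ν ψ|) ''
                {ψ | ψ ∈ Submodule.span ℝ (φ '' Set.Iio (max m ((m' : ℕ))))
                  ∧ (∫ y in I, (ψ y) ^ 2) = 1})) ^ 2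
              - p m (m' : ℕ))) ⟨mhat, hmhat⟩
        simpa [hχ, hSM, hM] using h6
end

section
/- Let I ⊆ ℝ be an interval, φ₁,…,φ_m : ℝ → ℝ bounded Lipschitz functions vanishing outside I and orthonormal in L²(I,dx), L(m) := Σ_{j=1}^m ‖φⱼ‖_Lip², and X₁,…,Xₙ real random variables satisfying the concentration hypothesis (C'): there are constants c > 0, Δ > 0 and H ∈ (0,1), with b_H := min(1,2−2H), such that for every Lipschitz ψ : ℝ → ℝ with ψ(X₁),…,ψ(Xₙ) integrable and every r > 0, P(|(1/n)Σ_{i=1}^n(ψ(X_i) − E[ψ(X_i)])| > r) ≤ 2 exp(−(r²/(c‖ψ‖_Lip²))(nΔ)^{b_H}). Define ν_n(φ) := (1/n)Σ_{i=1}^n (φ(X_i) − E[φ(X_i)]) and 𝓕_m := {φ ∈ span(φ₁,…,φ_m) : ‖φ‖_{L²(I)} = 1}. Then E[ sup_{φ∈𝓕_m} ν_n(φ)² ] = Σ_{j=1}^m E[ν_n(φⱼ)²] ≤ 2c·L(m)/(nΔ)^{b_H}; in particular ( E[ sup_{φ∈𝓕_m} |ν_n(φ)| ] )² ≤ 2c·L(m)/(nΔ)^{b_H}.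 -/
open MeasureTheory Real
open scoped NNReal ENNReal BigOperators

lemma exp_integral_aux {A : ℝ} (hA : 0 < A) :
    ∫ t in Set.Ioi (0:ℝ), Real.exp (-(A * t)) = 1 / A := by
  have hderiv : ∀ x ∈ Set.Ici (0:ℝ),
      HasDerivAt (fun t => -(Real.exp (-(A * t))) / A) (Real.exp (-(A * x))) x := by
    intro x _
    have h1 : HasDerivAt (fun t : ℝ => -(A * t)) (-A) x := by
      have h := ((hasDerivAt_id' x).const_mul A).neg; rwa [mul_one] at h
    have h2 := (h1.exp).neg.div_const A
    refine h2.congr_deriv ?_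
    field_simp
  have hint : IntegrableOn (fun t => Real.exp (-(A * t))) (Set.Ioi (0:ℝ)) := by
    simpa [neg_mul] using exp_neg_integrableOn_Ioi 0 hA
  have htend : Filter.Tendsto (fun t => -(Real.exp (-(A * t))) / A)
      Filter.atTop (nhds 0) := by
    have : Filter.Tendsto (fun t : ℝ => -(A * t)) Filter.atTop Filter.atBot := by
      simpa [neg_mul] using (Filter.tendsto_id (α := ℝ)).const_mul_atTop_of_neg
        (neg_neg_iff_pos.2 hA)
    have := (Real.tendsto_exp_atBot.comp this).neg.div_const A
    simpa using this
  have := integral_Ioi_of_hasDerivAt_of_tendsto' hderiv hint htend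
  simp only [mul_zero, neg_zero, Real.exp_zero] at this
  rw [this]
  ring

lemma moment_of_tail {Ω : Type*} [MeasurableSpace Ω] (P : Measure Ω) [IsProbabilityMeasure P]
    (Z : Ω → ℝ) (hZ : Measurable Z) (A : ℝ) (hA : 0 < A)
    (htail : ∀ r > (0:ℝ), P {ω | |Z ω| > r} ≤ ENNReal.ofReal (2 * Real.exp (-(A * r ^ 2)))) :
    Integrable (fun ω => (Z ω) ^ 2) P ∧ (∫ ω, (Z ω) ^ 2 ∂P) ≤ 2 / A := by
  have hmeas : Measurable (fun ω => (Z ω) ^ 2) := hZ.pow_const 2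
  have hnn : 0 ≤ᵐ[P] fun ω => (Z ω) ^ 2 := Filter.Eventually.of_forall fun ω => sq_nonneg _
  have layer : ∫⁻ ω, ENNReal.ofReal ((Z ω) ^ 2) ∂P
      = ∫⁻ t in Set.Ioi (0:ℝ), P {a | t < (Z a) ^ 2} :=
    lintegral_eq_lintegral_meas_lt P hnn hmeas.aemeasurable
  have hbound : ∫⁻ t in Set.Ioi (0:ℝ), P {a | t < (Z a) ^ 2}
      ≤ ∫⁻ t in Set.Ioi (0:ℝ), ENNReal.ofReal (2 * Real.exp (-(A * t))) := by
    refine lintegral_mono_ae ?_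
    filter_upwards [ae_restrict_mem measurableSet_Ioi] with t ht
    have ht' : (0:ℝ) < t := ht
    have hsub : {a | t < (Z a) ^ 2} ⊆ {a | |Z a| > Real.sqrt t} := by
      intro a ha
      have : Real.sqrt t < Real.sqrt ((Z a) ^ 2) := Real.sqrt_lt_sqrt ht'.le ha
      simpa [Real.sqrt_sq_eq_abs] using this
    calc P {a | t < (Z a) ^ 2} ≤ P {a | |Z a| > Real.sqrt t} := measure_mono hsub
      _ ≤ ENNReal.ofReal (2 * Real.exp (-(A * Real.sqrt t ^ 2))) :=
          htail _ (Real.sqrt_pos.2 ht')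
      _ = ENNReal.ofReal (2 * Real.exp (-(A * t))) := by
          rw [Real.sq_sqrt ht'.le]
  have hintexp : IntegrableOn (fun t => 2 * Real.exp (-(A * t))) (Set.Ioi (0:ℝ)) := by
    have : IntegrableOn (fun t => Real.exp (-(A * t))) (Set.Ioi (0:ℝ)) := by
      simpa [neg_mul] using exp_neg_integrableOn_Ioi 0 hA
    exact this.const_mul 2
  have hval : ∫⁻ t in Set.Ioi (0:ℝ), ENNReal.ofReal (2 * Real.exp (-(A * t)))
      = ENNReal.ofReal (2 / A) := by
    rw [← ofReal_integral_eq_lintegral_ofReal hintexp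
      (Filter.Eventually.of_forall fun t => by positivity)]
    rw [integral_const_mul, exp_integral_aux hA]
    congr 1; ring
  have hfin : ∫⁻ ω, ENNReal.ofReal ((Z ω) ^ 2) ∂P ≤ ENNReal.ofReal (2 / A) := by
    rw [layer]; exact hbound.trans (le_of_eq hval)
  have hint : Integrable (fun ω => (Z ω) ^ 2) P := by
    refine ⟨hmeas.aestronglyMeasurable, ?_⟩
    rw [hasFiniteIntegral_iff_ofReal hnn]
    exact lt_of_le_of_lt hfin ENNReal.ofReal_lt_top
  refine ⟨hint, ?_⟩
  rw [integral_eq_lintegral_of_nonneg_ae hnn hmeas.aestronglyMeasurable]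
  exact ENNReal.toReal_le_of_le_ofReal (by positivity) hfin


/-- Expected supremum of the squared empirical process over the unit sphere `𝓕_m` of the
model `S_m`: it equals `∑_j E[ν_n(φ_j)²]` and is bounded by `2cL(m)/(nΔ)^{b_H}`; in
particular `(E[sup_{𝓕_m} |ν_n|])² ≤ 2cL(m)/(nΔ)^{b_H}`. -/
theorem expected_sup_sq_empirical_process
    {Ω : Type*} [MeasurableSpace Ω] (P : Measure Ω) [IsProbabilityMeasure P]
    (I : Set ℝ) (hImeas : MeasurableSet I) (hIint : I.OrdConnected)
    (m n : ℕ) (hm : 1 ≤ m) (hn : 1 ≤ n)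
    (φ : ℕ → ℝ → ℝ) (K : ℕ → ℝ≥0)
    (hbdd : ∀ j < m, ∃ Cb : ℝ, ∀ x, |φ j x| ≤ Cb)
    (hlip : ∀ j < m, LipschitzWith (K j) (φ j))
    (hsupp : ∀ j < m, ∀ x ∉ I, φ j x = 0)
    (horth : ∀ j < m, ∀ k < m, (∫ x in I, φ j x * φ k x) = if j = k then (1 : ℝ) else 0)
    (L : ℝ) (hL : L = ∑ j ∈ Finset.range m, (K j : ℝ) ^ 2)
    (X : Fin n → Ω → ℝ) (hX : ∀ i, Measurable (X i))
    -- hypothesis (C')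
    (c Δ H bH : ℝ) (hc : 0 < c) (hΔ : 0 < Δ) (hH : H ∈ Set.Ioo (0 : ℝ) 1)
    (hbH : bH = min 1 (2 - 2 * H))
    (hC' : ∀ (ψ : ℝ → ℝ) (Kψ : ℝ≥0), LipschitzWith Kψ ψ →
        (∀ i, Integrable (fun ω => ψ (X i ω)) P) →
        ∀ r > (0 : ℝ),
          P {ω | |(n : ℝ)⁻¹ * ∑ i, (ψ (X i ω) - ∫ ω', ψ (X i ω') ∂P)| > r}
            ≤ ENNReal.ofReal
                (2 * Real.exp (-(r ^ 2 / (c * (Kψ : ℝ) ^ 2)) * ((n : ℝ) * Δ) ^ bH)))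
    -- the empirical process and the unit sphere of the model
    (ν : Ω → (ℝ → ℝ) → ℝ)
    (hν : ∀ ω ψ, ν ω ψ = (n : ℝ)⁻¹ * ∑ i, (ψ (X i ω) - ∫ ω', ψ (X i ω') ∂P))
    (𝓕m : Set (ℝ → ℝ))
    (h𝓕m : 𝓕m = {ψ | ψ ∈ Submodule.span ℝ (φ '' Set.Iio m)
      ∧ (∫ x in I, (ψ x) ^ 2) = 1}) :
    (∫ ω, sSup ((fun ψ : ℝ → ℝ => (ν ω ψ) ^ 2) '' 𝓕m) ∂P)
        = ∑ j ∈ Finset.range m, ∫ ω, (ν ω (φ j)) ^ 2 ∂P ∧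
    (∑ j ∈ Finset.range m, ∫ ω, (ν ω (φ j)) ^ 2 ∂P)
        ≤ 2 * c * L / ((n : ℝ) * Δ) ^ bH ∧
    (∫ ω, sSup ((fun ψ : ℝ → ℝ => |ν ω ψ|) '' 𝓕m) ∂P) ^ 2
        ≤ 2 * c * L / ((n : ℝ) * Δ) ^ bH := by
  classical
  set T : ℝ := ((n : ℝ) * Δ) ^ bH with hT
  have hn' : (0:ℝ) < n := by exact_mod_cast hn
  have hT0 : (0:ℝ) < T := Real.rpow_pos_of_pos (by positivity) _
  have hφmeas : ∀ j, j < m → Measurable (φ j) := fun j hj => (hlip j hj).continuous.measurable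
  -- square integrability on I
  have hsq : ∀ j, j < m → IntegrableOn (fun x => φ j x * φ j x) I := by
    intro j hj
    by_contra h
    have h1 := horth j hj j hj
    rw [if_pos rfl, integral_undef h] at h1
    norm_num at h1
  have hprod : ∀ j, j < m → ∀ k, k < m → IntegrableOn (fun x => φ j x * φ k x) I := by
    intro j hj k hk
    have hmeasp : AEStronglyMeasurable (fun x => φ j x * φ k x) (volume.restrict I) :=
      ((hφmeas j hj).mul (hφmeas k hk)).aestronglyMeasurable
    refine (((hsq j hj).add (hsq k hk)).div_const 2).mono' hmeasp ?_
    filter_upwards with x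
    show |φ j x * φ k x| ≤ (φ j x * φ j x + φ k x * φ k x) / 2
    rw [abs_mul]
    nlinarith [sq_nonneg (|φ j x| - |φ k x|), sq_abs (φ j x), sq_abs (φ k x)]
  -- L² expansion over the orthonormal system
  have hexp : ∀ a : Fin m → ℝ,
      (∫ x in I, (∑ j : Fin m, a j * φ (j:ℕ) x) ^ 2) = ∑ j : Fin m, (a j) ^ 2 := by
    intro a
    have e : ∀ x : ℝ, (∑ j : Fin m, a j * φ (j:ℕ) x) ^ 2
        = ∑ j : Fin m, ∑ k : Fin m, (a j * a k) * (φ (j:ℕ) x * φ (k:ℕ) x) := by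
      intro x
      rw [sq, Finset.sum_mul_sum]
      exact Finset.sum_congr rfl fun j _ => Finset.sum_congr rfl fun k _ => by ring
    simp_rw [e]
    have hInt1 : ∀ j k : Fin m,
        IntegrableOn (fun x => (a j * a k) * (φ (j:ℕ) x * φ (k:ℕ) x)) I :=
      fun j k => (hprod (j:ℕ) j.isLt (k:ℕ) k.isLt).const_mul _
    rw [integral_finset_sum _ (fun (j : Fin m) _ => integrable_finset_sum _
      (fun (k : Fin m) _ => hInt1 j k))]
    refine Finset.sum_congr rfl fun j _ => ?_
    rw [integral_finset_sum _ (fun (k : Fin m) _ => hInt1 j k)]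
    have e2 : ∀ k : Fin m, (∫ x in I, (a j * a k) * (φ (j:ℕ) x * φ (k:ℕ) x))
        = if j = k then (a j) ^ 2 else 0 := by
      intro k
      rw [integral_const_mul, horth j j.isLt k k.isLt]
      by_cases h : (j:ℕ) = (k:ℕ)
      · have hjk : j = k := Fin.val_injective h
        simp [h, hjk, sq]
      · have hjk : j ≠ k := fun hc => h (by rw [hc])
        simp [h, hjk]
    simp_rw [e2]
    simp
  -- integrability of φ j ∘ X i
  have hXint : ∀ j, j < m → ∀ i, Integrable (fun ω => φ j (X i ω)) P := by
    intro j hj i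
    obtain ⟨Cb, hCb⟩ := hbdd j hj
    refine (integrable_const Cb).mono' (((hφmeas j hj).comp (hX i)).aestronglyMeasurable) ?_
    filter_upwards with ω
    simpa [Real.norm_eq_abs] using hCb (X i ω)
  -- linearity of ν
  have hνlin : ∀ ω (a : Fin m → ℝ),
      ν ω (fun x => ∑ j : Fin m, a j * φ (j:ℕ) x) = ∑ j : Fin m, a j * ν ω (φ (j:ℕ)) := by
    intro ω a
    rw [hν]
    have e1 : ∀ i : Fin n, (∫ ω', ∑ j : Fin m, a j * φ (j:ℕ) (X i ω') ∂P)
        = ∑ j : Fin m, a j * ∫ ω', φ (j:ℕ) (X i ω') ∂P := by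
      intro i
      rw [integral_finset_sum _ fun (j : Fin m) _ => (hXint (j:ℕ) j.isLt i).const_mul _]
      exact Finset.sum_congr rfl fun j _ => integral_const_mul _ _
    calc (n : ℝ)⁻¹ * ∑ i, ((∑ j : Fin m, a j * φ (j:ℕ) (X i ω))
            - ∫ ω', ∑ j : Fin m, a j * φ (j:ℕ) (X i ω') ∂P)
        = (n : ℝ)⁻¹ * ∑ i, ∑ j : Fin m,
            a j * (φ (j:ℕ) (X i ω) - ∫ ω', φ (j:ℕ) (X i ω') ∂P) := by
          congr 1
          refine Finset.sum_congr rfl fun i _ => ?_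
          rw [e1 i, ← Finset.sum_sub_distrib]
          exact Finset.sum_congr rfl fun j _ => by ring
      _ = ∑ j : Fin m, a j * ((n : ℝ)⁻¹
            * ∑ i, (φ (j:ℕ) (X i ω) - ∫ ω', φ (j:ℕ) (X i ω') ∂P)) := by
          rw [Finset.sum_comm, Finset.mul_sum]
          exact Finset.sum_congr rfl fun j _ => by rw [← Finset.mul_sum]; ring
      _ = ∑ j : Fin m, a j * ν ω (φ (j:ℕ)) :=
          Finset.sum_congr rfl fun j _ => by rw [hν]
  -- representation of span elements
  have himg : φ '' Set.Iio m = Set.range (fun j : Fin m => φ (j:ℕ)) := by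
    ext f
    constructor
    · rintro ⟨j, hj, rfl⟩; exact ⟨⟨j, hj⟩, rfl⟩
    · rintro ⟨j, rfl⟩; exact ⟨j, j.isLt, rfl⟩
  have hrep : ∀ ψ ∈ Submodule.span ℝ (φ '' Set.Iio m),
      ∃ a : Fin m → ℝ, ψ = fun x => ∑ j : Fin m, a j * φ (j:ℕ) x := by
    intro ψ hψ
    rw [himg, Submodule.mem_span_range_iff_exists_fun] at hψ
    obtain ⟨a, ha⟩ := hψ
    refine ⟨a, ?_⟩
    funext x
    rw [← ha]
    simp [Finset.sum_apply]
  have hmemspan : ∀ a : Fin m → ℝ,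
      (fun x => ∑ j : Fin m, a j * φ (j:ℕ) x) ∈ Submodule.span ℝ (φ '' Set.Iio m) := by
    intro a
    have e : (fun x => ∑ j : Fin m, a j * φ (j:ℕ) x) = ∑ j : Fin m, a j • φ (j:ℕ) := by
      funext x; simp [Finset.sum_apply]
    rw [e]
    exact Submodule.sum_mem _ fun j _ => Submodule.smul_mem _ _
      (Submodule.subset_span ⟨(j:ℕ), j.isLt, rfl⟩)
  -- upper bound on the sphere
  have hub : ∀ ω, ∀ ψ ∈ 𝓕m, (ν ω ψ) ^ 2 ≤ ∑ j ∈ Finset.range m, (ν ω (φ j)) ^ 2 := by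
    intro ω ψ hψ
    rw [h𝓕m] at hψ
    obtain ⟨hsp, hnorm⟩ := hψ
    obtain ⟨a, rfl⟩ := hrep ψ hsp
    rw [hνlin]
    have hnorm' : (∫ x in I, (∑ j : Fin m, a j * φ (j:ℕ) x) ^ 2) = 1 := hnorm
    have hsum1 : ∑ j : Fin m, (a j) ^ 2 = 1 := (hexp a).symm.trans hnorm'
    have hcs := Finset.sum_mul_sq_le_sq_mul_sq Finset.univ a (fun j : Fin m => ν ω (φ (j:ℕ)))
    rw [hsum1, one_mul] at hcs
    calc (∑ j : Fin m, a j * ν ω (φ (j:ℕ))) ^ 2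
        ≤ ∑ j : Fin m, (ν ω (φ (j:ℕ))) ^ 2 := hcs
      _ = ∑ j ∈ Finset.range m, (ν ω (φ j)) ^ 2 := Fin.sum_univ_eq_sum_range (fun j => ν ω (φ j) ^ 2) m
  -- the supremum is attained
  have hmem : ∀ ω, ∃ ψ ∈ 𝓕m, (ν ω ψ) ^ 2 = ∑ j ∈ Finset.range m, (ν ω (φ j)) ^ 2
      ∧ |ν ω ψ| = Real.sqrt (∑ j ∈ Finset.range m, (ν ω (φ j)) ^ 2) := by
    intro ω
    set S := ∑ j ∈ Finset.range m, (ν ω (φ j)) ^ 2 with hSdef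
    have hS0 : 0 ≤ S := Finset.sum_nonneg fun j _ => sq_nonneg _
    by_cases hSz : S = 0
    · have hz : ∀ j ∈ Finset.range m, (ν ω (φ j)) ^ 2 = 0 :=
        (Finset.sum_eq_zero_iff_of_nonneg fun j _ => sq_nonneg _).1 hSz
      have h0 : (ν ω (φ 0)) ^ 2 = 0 := hz 0 (Finset.mem_range.2 hm)
      refine ⟨φ 0, ?_, ?_, ?_⟩
      · rw [h𝓕m]
        refine ⟨Submodule.subset_span ⟨0, hm, rfl⟩, ?_⟩
        have h1 := horth 0 hm 0 hm
        rw [if_pos rfl] at h1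
        simpa [pow_two] using h1
      · rw [h0, hSz]
      · rw [hSz, Real.sqrt_zero]
        have : ν ω (φ 0) = 0 := by
          have := sq_eq_zero_iff.1 h0; exact this
        rw [this, abs_zero]
    · have hSpos : 0 < S := lt_of_le_of_ne hS0 (Ne.symm hSz)
      set s := Real.sqrt S with hs
      have hspos : 0 < s := Real.sqrt_pos.2 hSpos
      have hss : s * s = S := Real.mul_self_sqrt hS0
      have hSfin : ∑ j : Fin m, (ν ω (φ (j:ℕ))) ^ 2 = S := Fin.sum_univ_eq_sum_range (fun j => ν ω (φ j) ^ 2) m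
      set a : Fin m → ℝ := fun j => ν ω (φ (j:ℕ)) / s with ha
      have hval : ν ω (fun x => ∑ j : Fin m, a j * φ (j:ℕ) x) = s := by
        rw [hνlin]
        have : ∀ j : Fin m, a j * ν ω (φ (j:ℕ)) = (ν ω (φ (j:ℕ))) ^ 2 / s := by
          intro j; rw [ha]; ring
        rw [Finset.sum_congr rfl fun j _ => this j, ← Finset.sum_div, hSfin]
        field_simp
        linarith [hss]
      refine ⟨fun x => ∑ j : Fin m, a j * φ (j:ℕ) x, ?_, ?_, ?_⟩
      · rw [h𝓕m]
        refine ⟨hmemspan a, ?_⟩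
        have e3 : (∫ x in I, (∑ j : Fin m, a j * φ (j:ℕ) x) ^ 2) = ∑ j : Fin m, (a j) ^ 2 :=
          hexp a
        have e4 : ∑ j : Fin m, (a j) ^ 2 = 1 := by
          have : ∀ j : Fin m, (a j) ^ 2 = (ν ω (φ (j:ℕ))) ^ 2 / S := by
            intro j
            rw [ha]
            rw [div_pow]
            rw [Real.sq_sqrt hS0]
          rw [Finset.sum_congr rfl fun j _ => this j, ← Finset.sum_div, hSfin,
            div_self hSz]
        exact e3.trans e4
      · rw [hval, sq, hss]
      · rw [hval, abs_of_pos hspos]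
  -- pointwise identification of the suprema
  have keysq : ∀ ω, sSup ((fun ψ : ℝ → ℝ => (ν ω ψ) ^ 2) '' 𝓕m)
      = ∑ j ∈ Finset.range m, (ν ω (φ j)) ^ 2 := by
    intro ω
    obtain ⟨ψ₀, hψ₀, hv, _⟩ := hmem ω
    refine le_antisymm (csSup_le ⟨_, ⟨ψ₀, hψ₀, rfl⟩⟩ ?_)
      (le_csSup ⟨∑ j ∈ Finset.range m, (ν ω (φ j)) ^ 2, ?_⟩ ⟨ψ₀, hψ₀, hv⟩)
    · rintro y ⟨ψ, hψ, rfl⟩; exact hub ω ψ hψ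
    · rintro y ⟨ψ, hψ, rfl⟩; exact hub ω ψ hψ
  have keyabs : ∀ ω, sSup ((fun ψ : ℝ → ℝ => |ν ω ψ|) '' 𝓕m)
      = Real.sqrt (∑ j ∈ Finset.range m, (ν ω (φ j)) ^ 2) := by
    intro ω
    obtain ⟨ψ₀, hψ₀, _, hv⟩ := hmem ω
    refine le_antisymm (csSup_le ⟨_, ⟨ψ₀, hψ₀, rfl⟩⟩ ?_)
      (le_csSup ⟨Real.sqrt (∑ j ∈ Finset.range m, (ν ω (φ j)) ^ 2), ?_⟩ ⟨ψ₀, hψ₀, hv⟩)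
    · rintro y ⟨ψ, hψ, rfl⟩; exact Real.abs_le_sqrt (hub ω ψ hψ)
    · rintro y ⟨ψ, hψ, rfl⟩; exact Real.abs_le_sqrt (hub ω ψ hψ)
  -- measurability of the coordinates
  have hνmeas : ∀ j, j < m → Measurable fun ω => ν ω (φ j) := by
    intro j hj
    have e : (fun ω => ν ω (φ j))
        = fun ω => (n:ℝ)⁻¹ * ∑ i, (φ j (X i ω) - ∫ ω', φ j (X i ω') ∂P) := by
      funext ω; rw [hν]
    rw [e]
    exact (Finset.measurable_sum Finset.univ fun i _ =>
      (((hφmeas j hj).comp (hX i)).sub measurable_const)).const_mul _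
  -- positivity of the Lipschitz constants
  have hKpos : ∀ j, j < m → (0:ℝ) < (K j : ℝ) := by
    intro j hj
    rcases (zero_le : 0 ≤ K j).lt_or_eq with h | h
    · exact_mod_cast h
    · exfalso
      have hK0 : K j = 0 := h.symm
      have hconst : ∀ x : ℝ, φ j x = φ j 0 := by
        intro x
        have := (hlip j hj).dist_le_mul x 0
        rw [hK0] at this
        simp only [NNReal.coe_zero, zero_mul] at this
        exact dist_le_zero.1 this
      have h1 := horth j hj j hj
      rw [if_pos rfl] at h1
      by_cases hI : I = Set.univ
      · rw [show (fun x => φ j x * φ j x) = fun _ => φ j 0 * φ j 0 from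
          funext fun x => by rw [hconst x]] at h1
        rw [setIntegral_const, hI, measureReal_def, Real.volume_univ] at h1
        simp at h1
      · obtain ⟨x₀, hx₀⟩ := (Set.ne_univ_iff_exists_notMem I).1 hI
        have hzero : φ j 0 = 0 := by
          rw [← hconst x₀]; exact hsupp j hj x₀ hx₀
        rw [show (fun x => φ j x * φ j x) = fun _ => (0:ℝ) from
          funext fun x => by rw [hconst x, hzero, mul_zero]] at h1
        simp at h1
  -- moment bounds from the tail assumption
  have hmom : ∀ j, j < m → Integrable (fun ω => (ν ω (φ j)) ^ 2) P ∧
      (∫ ω, (ν ω (φ j)) ^ 2 ∂P) ≤ 2 * c * (K j : ℝ) ^ 2 / T := by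
    intro j hj
    have hKj := hKpos j hj
    set A : ℝ := T / (c * (K j : ℝ) ^ 2) with hA
    have hApos : 0 < A := div_pos hT0 (by positivity)
    have htail : ∀ r > (0:ℝ),
        P {ω | |ν ω (φ j)| > r} ≤ ENNReal.ofReal (2 * Real.exp (-(A * r ^ 2))) := by
      intro r hr
      have hc' := hC' (φ j) (K j) (hlip j hj) (hXint j hj) r hr
      have heq : {ω | |(n:ℝ)⁻¹ * ∑ i, (φ j (X i ω) - ∫ ω', φ j (X i ω') ∂P)| > r}
          = {ω | |ν ω (φ j)| > r} := by
        ext ω; simp only [Set.mem_setOf_eq]; rw [hν]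
      have harg : -(r ^ 2 / (c * (K j : ℝ) ^ 2)) * T = -(A * r ^ 2) := by
        rw [hA]; ring
      rw [heq, harg] at hc'
      exact hc'
    have hM := moment_of_tail P (fun ω => ν ω (φ j)) (hνmeas j hj) A hApos htail
    refine ⟨hM.1, hM.2.trans (le_of_eq ?_)⟩
    rw [hA]
    field_simp
  have hint_g : ∀ j ∈ Finset.range m, Integrable (fun ω => (ν ω (φ j)) ^ 2) P :=
    fun j hj => (hmom j (Finset.mem_range.1 hj)).1
  -- part 1
  have part1 : (∫ ω, sSup ((fun ψ : ℝ → ℝ => (ν ω ψ) ^ 2) '' 𝓕m) ∂P)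
      = ∑ j ∈ Finset.range m, ∫ ω, (ν ω (φ j)) ^ 2 ∂P := by
    simp only [keysq]
    exact integral_finset_sum _ hint_g
  -- part 2
  have part2 : (∑ j ∈ Finset.range m, ∫ ω, (ν ω (φ j)) ^ 2 ∂P) ≤ 2 * c * L / T := by
    calc ∑ j ∈ Finset.range m, ∫ ω, (ν ω (φ j)) ^ 2 ∂P
        ≤ ∑ j ∈ Finset.range m, 2 * c * (K j : ℝ) ^ 2 / T :=
          Finset.sum_le_sum fun j hj => (hmom j (Finset.mem_range.1 hj)).2
      _ = 2 * c * L / T := by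
          rw [← Finset.sum_div, hL, Finset.mul_sum]
  refine ⟨part1, part2, ?_⟩
  -- part 3
  set g : Ω → ℝ := fun ω => ∑ j ∈ Finset.range m, (ν ω (φ j)) ^ 2 with hg
  have hgmeas : Measurable g :=
    Finset.measurable_sum _ fun j hj => ((hνmeas j (Finset.mem_range.1 hj)).pow_const 2)
  have hgint : Integrable g P := integrable_finset_sum _ hint_g
  have hgnn : ∀ ω, 0 ≤ g ω := fun ω => Finset.sum_nonneg fun j _ => sq_nonneg _
  have hfmeas : Measurable fun ω => Real.sqrt (g ω) :=
    Real.continuous_sqrt.measurable.comp hgmeas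
  have hmem2 : MemLp (fun ω => Real.sqrt (g ω)) 2 P := by
    rw [memLp_two_iff_integrable_sq hfmeas.aestronglyMeasurable]
    refine hgint.congr ?_
    filter_upwards with ω
    rw [Real.sq_sqrt (hgnn ω)]
  have hvar := ProbabilityTheory.variance_nonneg (fun ω => Real.sqrt (g ω)) P
  rw [ProbabilityTheory.variance_eq_sub hmem2] at hvar
  simp only [Pi.pow_apply] at hvar
  have h3 : (∫ ω, (Real.sqrt (g ω)) ^ 2 ∂P) = ∫ ω, g ω ∂P :=
    integral_congr_ae (Filter.Eventually.of_forall fun ω => Real.sq_sqrt (hgnn ω))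
  have h4 : (∫ ω, g ω ∂P) = ∑ j ∈ Finset.range m, ∫ ω, (ν ω (φ j)) ^ 2 ∂P :=
    integral_finset_sum _ hint_g
  simp only [keyabs]
  calc (∫ ω, Real.sqrt (g ω) ∂P) ^ 2
      ≤ ∫ ω, (Real.sqrt (g ω)) ^ 2 ∂P := by linarith
    _ = ∑ j ∈ Finset.range m, ∫ ω, (ν ω (φ j)) ^ 2 ∂P := h3.trans h4
    _ ≤ 2 * c * L / T := part2
end
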